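/- arXiv:1608.00917 — 2 statements merged into one kernel-verified Lean document; each statement's English description precedes it below -/
import Mathlib

section
/- There exist thresholds γ*_{i,k} > 0 (independent of the scaling factors) such that whenever 0 < γ^j_{i,k} < γ*_{i,k} for all i, all j ∈ 𝒩_i and all k ≥ 1, then for every k ≥ 1 with (η_{1,k−1|k−1},…,η_{N,k−1|k−1}) ≠ 0 the Lyapunov function V_k = Σ_{i=1}^N η_{i,k|k}^T Γ_{i,k|k}^{−1} η_{i,k|k} of the distributed local Kalman consensus filter satisfies V_k − V_{k−1} < −√2 · Σ_{î=1}^{N−1} γ^{î+1}_{î,k} · ‖u^{î+1}_{î,k}‖², where u^j_{i,k} = Î_{j,i}η_{j,k|k−1} − Î_{i,j}η_{i,k|k−1} is the neighbor disagreement and ‖·‖ is the Euclidean norm. -/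
open Matrix Filter Finset

noncomputable section

/-- Loewner strict order `A < B`. -/
def loewnerLT {m : Type*} [Fintype m] (A B : Matrix m m ℝ) : Prop := (B - A).PosDef

/-- Loewner order `A ≤ B`. -/
def loewnerLE {m : Type*} [Fintype m] (A B : Matrix m m ℝ) : Prop := (B - A).PosSemidef

/-- smallest (real) eigenvalue of a matrix -/
def lamMin {N : ℕ} (M : Matrix (Fin N) (Fin N) ℝ) : ℝ :=
  sInf {t : ℝ | ∃ v : Fin N → ℝ, v ≠ 0 ∧ M.mulVec v = t • v}

/-- largest (real) eigenvalue of a matrix -/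
def lamMax {N : ℕ} (M : Matrix (Fin N) (Fin N) ℝ) : ℝ :=
  sSup {t : ℝ | ∃ v : Fin N → ℝ, v ≠ 0 ∧ M.mulVec v = t • v}

/-- spectral norm (ℓ²-operator norm) of a square matrix -/
def spectralNormMat {N : ℕ} (M : Matrix (Fin N) (Fin N) ℝ) : ℝ :=
  ‖Matrix.toEuclideanCLM (𝕜 := ℝ) M‖

/-- largest singular value -/
def sigmaMax {N : ℕ} (M : Matrix (Fin N) (Fin N) ℝ) : ℝ := spectralNormMat M

/-- maximum absolute row-sum matrix norm -/
def rowSumNorm {m n : ℕ} (M : Matrix (Fin m) (Fin n) ℝ) : ℝ :=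
  ⨆ i : Fin m, ∑ j, |M i j|

/-- Euclidean norm of a vector -/
def euclNorm {N : ℕ} (v : Fin N → ℝ) : ℝ := Real.sqrt (∑ j, (v j) ^ 2)

/-- the free-flow mode matrix A_FF -/
def matAFF (N : ℕ) (θv : ℝ) : Matrix (Fin N) (Fin N) ℝ :=
  Matrix.of fun i j =>
    if (i : ℕ) = 0 ∧ (j : ℕ) = 0 then 1
    else if i = j then 1 - θv
    else if (i : ℕ) = (j : ℕ) + 1 then θv
    else 0

/-- the congestion mode matrix A_CC -/
def matACC (N : ℕ) (θw : ℝ) : Matrix (Fin N) (Fin N) ℝ :=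
  Matrix.of fun i j =>
    if (i : ℕ) = N - 1 ∧ (j : ℕ) = N - 1 then 1
    else if i = j then 1 - θw
    else if (j : ℕ) = (i : ℕ) + 1 then θw
    else 0

/-- the congestion–freeflow mode matrix A_CF^s = diag(Δ_s, Θ_{N−s}) -/
def matACF (N s : ℕ) (θv θw : ℝ) : Matrix (Fin N) (Fin N) ℝ :=
  Matrix.of fun i j =>
    if (i : ℕ) < s ∧ (j : ℕ) < s then
      (if i = j then 1 - θw else if (j : ℕ) = (i : ℕ) + 1 then θw else 0)
    else if s ≤ (i : ℕ) ∧ s ≤ (j : ℕ) then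
      (if i = j then 1 - θv else if (i : ℕ) = (j : ℕ) + 1 then θv else 0)
    else 0

/-- set of observable-mode state transition matrices 𝒜_O -/
def setAO (N : ℕ) (θv θw : ℝ) : Set (Matrix (Fin N) (Fin N) ℝ) :=
  {matAFF N θv, matACC N θw} ∪ {M | ∃ s, 1 ≤ s ∧ s ≤ N - 1 ∧ M = matACF N s θv θw}

/-- boundary output matrix H_b, rows e_1ᵀ and e_nᵀ -/
def matHb (N : ℕ) : Matrix (Fin 2) (Fin N) ℝ :=
  Matrix.of fun i j =>
    if (i : ℕ) = 0 ∧ (j : ℕ) = 0 then 1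
    else if (i : ℕ) = 1 ∧ (j : ℕ) = N - 1 then 1
    else 0

/-- standing assumption on output matrices: pairwise distinct standard basis rows,
including e_1ᵀ and e_nᵀ -/
def standingH {mk N : ℕ} (H : Matrix (Fin mk) (Fin N) ℝ) : Prop :=
  (∀ p : Fin mk, ∃ l : Fin N, H p = fun j => if j = l then 1 else 0) ∧
  (∀ p q : Fin mk, H p = H q → p = q) ∧
  (∃ p : Fin mk, H p = fun j : Fin N => if (j : ℕ) = 0 then 1 else 0) ∧
  (∃ p : Fin mk, H p = fun j : Fin N => if (j : ℕ) = N - 1 then 1 else 0)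

/-- ascending product of inverses  M_lo⁻¹ · M_{lo+1}⁻¹ ⋯ M_hi⁻¹ -/
def prodInvAsc {N : ℕ} (M : ℕ → Matrix (Fin N) (Fin N) ℝ) (lo hi : ℕ) :
    Matrix (Fin N) (Fin N) ℝ :=
  ((List.range (hi + 1 - lo)).map (fun t => (M (lo + t))⁻¹)).prod

/-- descending product  M_hi · M_{hi−1} ⋯ M_lo -/
def prodDesc {N : ℕ} (M : ℕ → Matrix (Fin N) (Fin N) ℝ) (hi lo : ℕ) :
    Matrix (Fin N) (Fin N) ℝ :=
  ((List.range (hi + 1 - lo)).map (fun t => M (hi - t))).prod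

/-- a_𝓘 -/
def aI (N : ℕ) (θv θw r2 : ℝ) : ℝ :=
  r2⁻¹ * sInf {t : ℝ | ∃ M : ℕ → Matrix (Fin N) (Fin N) ℝ,
    (∀ ι, 1 ≤ ι → ι ≤ max 1 (N - 2) → M ι ∈ setAO N θv θw) ∧
    t = lamMin ((matHb N)ᵀ * matHb N +
      ∑ ι ∈ Finset.Icc 1 (max 1 (N - 2)),
        (prodInvAsc M ι (max 1 (N - 2)))ᵀ * (matHb N)ᵀ * matHb N *
          prodInvAsc M ι (max 1 (N - 2)))}

/-- b_𝓘 -/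
def bI (N : ℕ) (θv θw r1 : ℝ) : ℝ :=
  r1⁻¹ * sSup {t : ℝ | ∃ M : ℕ → Matrix (Fin N) (Fin N) ℝ,
    (∀ ι, 1 ≤ ι → ι ≤ max 1 (N - 2) → M ι ∈ setAO N θv θw) ∧
    t = lamMax (1 +
      ∑ ι ∈ Finset.Icc 1 (max 1 (N - 2)),
        (prodInvAsc M ι (max 1 (N - 2)))ᵀ * prodInvAsc M ι (max 1 (N - 2)))}

/-- a_𝓒 -/
def aC (N : ℕ) (θv θw q1 : ℝ) : ℝ :=
  q1 * sInf {t : ℝ | ∃ M : ℕ → Matrix (Fin N) (Fin N) ℝ,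
    (∀ ι, 1 ≤ ι → ι ≤ max 1 (N - 2) → M ι ∈ setAO N θv θw) ∧
    t = lamMin (1 +
      ∑ ι ∈ Finset.Icc 1 (max 1 (N - 2) - 1),
        prodDesc M (max 1 (N - 2) - 1) ι * (prodDesc M (max 1 (N - 2) - 1) ι)ᵀ)}

/-- b_𝓒 -/
def bC (N : ℕ) (θv θw q2 : ℝ) : ℝ :=
  q2 * sSup {t : ℝ | ∃ M : ℕ → Matrix (Fin N) (Fin N) ℝ,
    (∀ ι, 1 ≤ ι → ι ≤ max 1 (N - 2) → M ι ∈ setAO N θv θw) ∧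
    t = lamMax (1 +
      ∑ ι ∈ Finset.Icc 1 (max 1 (N - 2) - 1),
        prodDesc M (max 1 (N - 2) - 1) ι * (prodDesc M (max 1 (N - 2) - 1) ι)ᵀ)}

/-- constant c₁ -/
def cLow (N : ℕ) (θv θw q1 q2 r1 r2 : ℝ) : ℝ :=
  min (aI N θv θw r2) (aC N θv θw q1) /
    (1 + min (aI N θv θw r2) (aC N θv θw q1) * max (bI N θv θw r1) (bC N θv θw q2))

/-- constant c₂ -/
def cHigh (N : ℕ) (θv θw q1 q2 r1 r2 : ℝ) : ℝ :=
  (1 + min (aI N θv θw r2) (aC N θv θw q1) * max (bI N θv θw r1) (bC N θv θw q2)) /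
    min (aI N θv θw r2) (aC N θv θw q1)


/-- left selector `Î_{i,j}` for `j = i−1`: picks the first `o` components -/
def selLeft (o d : ℕ) : Matrix (Fin o) (Fin d) ℝ :=
  Matrix.of fun r c => if (c : ℕ) = (r : ℕ) then 1 else 0

/-- right selector `Î_{i,j}` for `j = i+1`: picks the last `o` components -/
def selRight (o d : ℕ) : Matrix (Fin o) (Fin d) ℝ :=
  Matrix.of fun r c => if (c : ℕ) = d - o + (r : ℕ) then 1 else 0


section AuxAll
set_option linter.unusedSectionVars false

section Aux
variable {n o : Type*} [Fintype n] [Fintype o] [DecidableEq n]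

lemma my_herm_tr {M : Matrix n n ℝ} (h : M.IsHermitian) : Mᵀ = M := by
  rw [← conjTranspose_eq_transpose_of_trivial]; exact h

lemma my_herm_of_tr {M : Matrix n n ℝ} (h : Mᵀ = M) : M.IsHermitian := by
  rw [Matrix.IsHermitian, conjTranspose_eq_transpose_of_trivial]; exact h

lemma my_psd_nonneg {M : Matrix n n ℝ} (h : M.PosSemidef) (x : n → ℝ) : 0 ≤ x ⬝ᵥ M *ᵥ x := by
  simpa using h.dotProduct_mulVec_nonneg x

lemma my_pd_pos {M : Matrix n n ℝ} (h : M.PosDef) {x : n → ℝ} (hx : x ≠ 0) :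
    0 < x ⬝ᵥ M *ᵥ x := by
  simpa using h.dotProduct_mulVec_pos hx

lemma my_dot_symm {M : Matrix n n ℝ} (h : Mᵀ = M) (x y : n → ℝ) :
    x ⬝ᵥ M *ᵥ y = y ⬝ᵥ M *ᵥ x := by
  rw [Matrix.dotProduct_mulVec, ← Matrix.mulVec_transpose, h, dotProduct_comm]

lemma my_dot_mulVec_left (C : Matrix n o ℝ) (u : o → ℝ) (w : n → ℝ) :
    (C *ᵥ u) ⬝ᵥ w = u ⬝ᵥ (Cᵀ *ᵥ w) := by
  rw [dotProduct_comm, Matrix.dotProduct_mulVec, ← Matrix.mulVec_transpose, dotProduct_comm]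

lemma my_conj_dot (C : Matrix n o ℝ) (P : Matrix n n ℝ) (u : o → ℝ) :
    (C *ᵥ u) ⬝ᵥ P *ᵥ (C *ᵥ u) = u ⬝ᵥ (Cᵀ * P * C) *ᵥ u := by
  rw [Matrix.mulVec_mulVec, my_dot_mulVec_left, Matrix.mulVec_mulVec, Matrix.mul_assoc]

end Aux

section Aux2
variable {n o : Type*} [Fintype n] [Fintype o] [DecidableEq n]

lemma my_quad_expand {M : Matrix n n ℝ} (h : Mᵀ = M) (x y : n → ℝ) :
    (x + y) ⬝ᵥ M *ᵥ (x + y) =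
      x ⬝ᵥ M *ᵥ x + 2 * (y ⬝ᵥ M *ᵥ x) + y ⬝ᵥ M *ᵥ y := by
  have hs : x ⬝ᵥ M *ᵥ y = y ⬝ᵥ M *ᵥ x := my_dot_symm h x y
  rw [Matrix.mulVec_add, dotProduct_add, add_dotProduct, add_dotProduct, hs]
  ring

lemma my_psd_cs {M : Matrix n n ℝ} (h : M.PosSemidef) (y z : n → ℝ) :
    (y ⬝ᵥ M *ᵥ z) ^ 2 ≤ (y ⬝ᵥ M *ᵥ y) * (z ⬝ᵥ M *ᵥ z) := by
  have hsym : Mᵀ = M := my_herm_tr h.1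
  set a := y ⬝ᵥ M *ᵥ y with ha
  set b := y ⬝ᵥ M *ᵥ z with hb
  set c := z ⬝ᵥ M *ᵥ z with hc
  have key : ∀ t : ℝ, 0 ≤ a + 2 * t * b + t ^ 2 * c := by
    intro t
    have h0 := my_psd_nonneg h (y + t • z)
    have e1 : (y + t • z) ⬝ᵥ M *ᵥ (y + t • z) = a + 2 * t * b + t ^ 2 * c := by
      have hz : (t • z) ⬝ᵥ M *ᵥ y = t * b := by
        rw [smul_dotProduct, smul_eq_mul, my_dot_symm hsym z y, ← hb]
      rw [my_quad_expand hsym, hz]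
      rw [ha, hb, hc]
      rw [Matrix.mulVec_smul, dotProduct_smul, smul_dotProduct]
      simp [smul_eq_mul]
      ring
    rw [e1] at h0; exact h0
  have hcn : 0 ≤ c := my_psd_nonneg h z
  rcases eq_or_lt_of_le hcn with hc0 | hcpos
  · have hb0 : b = 0 := by
      by_contra hbne
      have h1 := key (-(a + 1) / (2 * b))
      have h2 : (2 : ℝ) * b ≠ 0 := by
        intro hh; apply hbne; linarith [hh]
      have h3 : 2 * (-(a + 1) / (2 * b)) * b = -(a + 1) := by
        field_simp
      rw [← hc0, h3] at h1
      simp at h1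
      linarith
    rw [hb0, ← hc0]
    nlinarith [my_psd_nonneg h y]
  · have h1 := key (-b / c)
    have h2 : c ≠ 0 := ne_of_gt hcpos
    have h3 : a + 2 * (-b / c) * b + (-b / c) ^ 2 * c = a - b ^ 2 / c := by
      field_simp; ring
    rw [h3] at h1
    have : b ^ 2 / c ≤ a := by linarith
    calc b ^ 2 = (b ^ 2 / c) * c := by field_simp
    _ ≤ a * c := by nlinarith

lemma my_quad_add_le {M : Matrix n n ℝ} (h : M.PosSemidef) (x y : n → ℝ) :
    (x + y) ⬝ᵥ M *ᵥ (x + y) ≤ 2 * (x ⬝ᵥ M *ᵥ x) + 2 * (y ⬝ᵥ M *ᵥ y) := by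
  have hsym : Mᵀ = M := my_herm_tr h.1
  have h0 := my_psd_nonneg h (x - y)
  have e1 : x - y = x + (-y) := by ring
  rw [e1, my_quad_expand hsym] at h0
  rw [my_quad_expand hsym]
  have e2 : (-y) ⬝ᵥ M *ᵥ x = -(y ⬝ᵥ M *ᵥ x) := by rw [neg_dotProduct]
  have e3 : (-y) ⬝ᵥ M *ᵥ (-y) = y ⬝ᵥ M *ᵥ y := by
    rw [Matrix.mulVec_neg, dotProduct_neg, neg_dotProduct, neg_neg]
  rw [e2, e3] at h0
  linarith

lemma my_quad_le_sumAbs (M : Matrix o o ℝ) (x : o → ℝ) :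
    x ⬝ᵥ M *ᵥ x ≤ (∑ p, ∑ q, |M p q|) * (∑ j, (x j) ^ 2) := by
  have hS : ∀ j : o, (x j) ^ 2 ≤ ∑ j', (x j') ^ 2 := by
    intro j
    exact Finset.single_le_sum (fun i _ => sq_nonneg (x i)) (Finset.mem_univ j)
  have hSnn : 0 ≤ ∑ j', (x j') ^ 2 := Finset.sum_nonneg fun i _ => sq_nonneg _
  calc x ⬝ᵥ M *ᵥ x = ∑ p, ∑ q, x p * (M p q * x q) := by
        simp [dotProduct, Matrix.mulVec, Finset.mul_sum]
  _ ≤ ∑ p, ∑ q, |M p q| * (∑ j, (x j) ^ 2) := by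
        apply Finset.sum_le_sum; intro p _
        apply Finset.sum_le_sum; intro q _
        have h1 : x p * (M p q * x q) ≤ |M p q| * (|x p| * |x q|) := by
          calc x p * (M p q * x q) ≤ |x p * (M p q * x q)| := le_abs_self _
          _ = |M p q| * (|x p| * |x q|) := by rw [abs_mul, abs_mul]; ring
        have h2 : |x p| * |x q| ≤ ∑ j, (x j) ^ 2 := by
          nlinarith [hS p, hS q, abs_nonneg (x p), abs_nonneg (x q), sq_abs (x p), sq_abs (x q)]
        calc x p * (M p q * x q) ≤ |M p q| * (|x p| * |x q|) := h1
        _ ≤ |M p q| * (∑ j, (x j) ^ 2) := by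
              exact mul_le_mul_of_nonneg_left h2 (abs_nonneg _)
  _ = (∑ p, ∑ q, |M p q|) * (∑ j, (x j) ^ 2) := by rw [Finset.sum_mul]; congr 1; ext p; rw [Finset.sum_mul]

end Aux2

section Aux3
variable {n m : Type*} [Fintype n] [Fintype m] [DecidableEq n] [DecidableEq m]

lemma my_smul_one_posdef {c : ℝ} (hc : 0 < c) : ((c • 1 : Matrix n n ℝ)).PosDef := by
  refine Matrix.PosDef.of_dotProduct_mulVec_pos ?_ ?_
  · apply my_herm_of_tr; simp
  · intro x hx
    have h1 : (star x) ⬝ᵥ ((c • (1 : Matrix n n ℝ)) *ᵥ x) = c * (x ⬝ᵥ x) := by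
      simp [Matrix.smul_mulVec, Matrix.one_mulVec]
    rw [h1]
    have h2 : 0 < x ⬝ᵥ x := by
      have := Matrix.dotProduct_star_self_pos_iff (v := x) |>.mpr hx
      simpa using this
    positivity

lemma my_S_posdef {G : Matrix n n ℝ} {Hm : Matrix m n ℝ} {Rm : Matrix m m ℝ}
    (hG : G.PosDef) (hR : Rm.PosDef) : (Rm + Hm * G * Hmᵀ).PosDef := by
  have h1 : (Hm * G * Hmᴴ).PosSemidef := hG.posSemidef.mul_mul_conjTranspose_same Hm
  rw [conjTranspose_eq_transpose_of_trivial] at h1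
  exact hR.add_posSemidef h1

lemma my_post_sub_psd {G : Matrix n n ℝ} {Hm : Matrix m n ℝ} {Rm : Matrix m m ℝ}
    (hG : G.PosDef) (hR : Rm.PosDef) :
    (G - (G - G * Hmᵀ * (Rm + Hm * G * Hmᵀ)⁻¹ * Hm * G)).PosSemidef := by
  rw [sub_sub_cancel]
  have hGt : Gᵀ = G := my_herm_tr hG.isHermitian
  have hS := my_S_posdef (Hm := Hm) hG hR
  have h1 : ((Hm * G)ᴴ * (Rm + Hm * G * Hmᵀ)⁻¹ * (Hm * G)).PosSemidef :=
    hS.inv.posSemidef.conjTranspose_mul_mul_same (Hm * G)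
  rw [conjTranspose_eq_transpose_of_trivial, Matrix.transpose_mul, hGt,
      ← Matrix.mul_assoc] at h1
  exact h1

lemma my_post_posdef {G : Matrix n n ℝ} {Hm : Matrix m n ℝ} {Rm : Matrix m m ℝ}
    (hG : G.PosDef) (hR : Rm.PosDef) :
    (G - G * Hmᵀ * (Rm + Hm * G * Hmᵀ)⁻¹ * Hm * G).PosDef := by
  have hGt : Gᵀ = G := my_herm_tr hG.isHermitian
  have hS := my_S_posdef (Hm := Hm) hG hR
  have hSdet : IsUnit (Rm + Hm * G * Hmᵀ).det := (Matrix.isUnit_iff_isUnit_det _).mp hS.isUnit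
  have hSi : ((Rm + Hm * G * Hmᵀ)⁻¹)ᵀ = (Rm + Hm * G * Hmᵀ)⁻¹ := my_herm_tr hS.inv.isHermitian
  refine Matrix.PosDef.of_dotProduct_mulVec_pos ?_ ?_
  · apply my_herm_of_tr
    simp only [Matrix.transpose_sub, Matrix.transpose_mul, Matrix.transpose_transpose, hGt, hSi]
    rw [Matrix.mul_assoc, Matrix.mul_assoc, Matrix.mul_assoc, Matrix.mul_assoc]
  · intro x hx
    simp only [star_trivial]
    set S := Rm + Hm * G * Hmᵀ with hSdef
    set c := (Hm * G) *ᵥ x with hc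
    set y := S⁻¹ *ᵥ c with hy
    have eqmat : G * Hmᵀ * S⁻¹ * Hm * G = (Hm * G)ᵀ * S⁻¹ * (Hm * G) := by
      rw [Matrix.transpose_mul, hGt, Matrix.mul_assoc, Matrix.mul_assoc, Matrix.mul_assoc]
    have eq1 : x ⬝ᵥ (G * Hmᵀ * S⁻¹ * Hm * G) *ᵥ x = c ⬝ᵥ S⁻¹ *ᵥ c := by
      rw [eqmat, ← my_conj_dot]
    have hSy : S *ᵥ y = c := by
      rw [hy, Matrix.mulVec_mulVec, Matrix.mul_nonsing_inv _ hSdet, Matrix.one_mulVec]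
    have eq2 : c ⬝ᵥ S⁻¹ *ᵥ c = y ⬝ᵥ S *ᵥ y := by
      rw [hSy, ← hy, dotProduct_comm]
    have eq3 : y ⬝ᵥ S *ᵥ y = y ⬝ᵥ Rm *ᵥ y + y ⬝ᵥ (Hm * G * Hmᵀ) *ᵥ y := by
      rw [hSdef, Matrix.add_mulVec, dotProduct_add]
    have eq4 : (x - Hmᵀ *ᵥ y) ⬝ᵥ G *ᵥ (x - Hmᵀ *ᵥ y)
        = x ⬝ᵥ G *ᵥ x - 2 * (y ⬝ᵥ c) + y ⬝ᵥ (Hm * G * Hmᵀ) *ᵥ y := by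
      have e1 : x - Hmᵀ *ᵥ y = x + (-(Hmᵀ *ᵥ y)) := by abel
      rw [e1, my_quad_expand hGt]
      have e2 : (-(Hmᵀ *ᵥ y)) ⬝ᵥ G *ᵥ x = -(y ⬝ᵥ c) := by
        rw [neg_dotProduct, my_dot_mulVec_left, Matrix.transpose_transpose, hc,
            ← Matrix.mulVec_mulVec]
      have e3 : (-(Hmᵀ *ᵥ y)) ⬝ᵥ G *ᵥ (-(Hmᵀ *ᵥ y)) = y ⬝ᵥ (Hm * G * Hmᵀ) *ᵥ y := by
        rw [Matrix.mulVec_neg, dotProduct_neg, neg_dotProduct, neg_neg, my_conj_dot,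
            Matrix.transpose_transpose]
      rw [e2, e3]
      ring
    have eq5 : y ⬝ᵥ c = y ⬝ᵥ S *ᵥ y := by rw [hSy]
    have goalEq : x ⬝ᵥ (G - G * Hmᵀ * S⁻¹ * Hm * G) *ᵥ x
        = (x - Hmᵀ *ᵥ y) ⬝ᵥ G *ᵥ (x - Hmᵀ *ᵥ y) + y ⬝ᵥ Rm *ᵥ y := by
      rw [Matrix.sub_mulVec, dotProduct_sub, eq1, eq2]
      rw [eq4, eq5]
      linarith [eq3]
    rw [goalEq]
    by_cases hy0 : y = 0
    · have hv : x - Hmᵀ *ᵥ y = x := by rw [hy0]; simp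
      rw [hv, hy0]
      simpa using my_pd_pos hG hx
    · have h1 : 0 ≤ (x - Hmᵀ *ᵥ y) ⬝ᵥ G *ᵥ (x - Hmᵀ *ᵥ y) := my_psd_nonneg hG.posSemidef _
      have h2 : 0 < y ⬝ᵥ Rm *ᵥ y := my_pd_pos hR hy0
      linarith

end Aux3

section Aux4
variable {n : Type*} [Fintype n] [DecidableEq n]

lemma my_kalman_lt {Γ Qm G Gp Am : Matrix n n ℝ}
    (hΓ : Γ.PosDef) (hQ : Qm.PosDef) (hGeq : G = Am * Γ * Amᵀ + Qm)
    (hGp : Gp.PosDef) (hle : (G - Gp).PosSemidef) {x : n → ℝ} (hx : x ≠ 0) :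
    ((Gp * G⁻¹) *ᵥ (Am *ᵥ x)) ⬝ᵥ Gp⁻¹ *ᵥ ((Gp * G⁻¹) *ᵥ (Am *ᵥ x)) < x ⬝ᵥ Γ⁻¹ *ᵥ x := by
  have hAΓA : (Am * Γ * Amᵀ).PosSemidef := by
    have := hΓ.posSemidef.mul_mul_conjTranspose_same Am
    rwa [conjTranspose_eq_transpose_of_trivial] at this
  have hGpd : G.PosDef := by rw [hGeq]; exact Matrix.PosDef.posSemidef_add hAΓA hQ
  have hGdet : IsUnit G.det := (Matrix.isUnit_iff_isUnit_det _).mp hGpd.isUnit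
  have hGpdet : IsUnit Gp.det := (Matrix.isUnit_iff_isUnit_det _).mp hGp.isUnit
  have hΓdet : IsUnit Γ.det := (Matrix.isUnit_iff_isUnit_det _).mp hΓ.isUnit
  have hGt : Gᵀ = G := my_herm_tr hGpd.isHermitian
  have hGpt : Gpᵀ = Gp := my_herm_tr hGp.isHermitian
  have hΓt : Γᵀ = Γ := my_herm_tr hΓ.isHermitian
  have hGit : (G⁻¹)ᵀ = G⁻¹ := by rw [Matrix.transpose_nonsing_inv, hGt]
  have hΓit : (Γ⁻¹)ᵀ = Γ⁻¹ := by rw [Matrix.transpose_nonsing_inv, hΓt]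
  set a := Am *ᵥ x with ha
  set w := G⁻¹ *ᵥ a with hw
  have step1 : ((Gp * G⁻¹) *ᵥ a) ⬝ᵥ Gp⁻¹ *ᵥ ((Gp * G⁻¹) *ᵥ a) = w ⬝ᵥ Gp *ᵥ w := by
    have e1 : (Gp * G⁻¹) *ᵥ a = Gp *ᵥ w := by
      rw [hw]; simp [Matrix.mulVec_mulVec, Matrix.mul_assoc]
    rw [e1, my_conj_dot, hGpt, Matrix.mul_nonsing_inv _ hGpdet, Matrix.one_mul]
  have step2 : w ⬝ᵥ Gp *ᵥ w ≤ w ⬝ᵥ G *ᵥ w := by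
    have h0 := my_psd_nonneg hle w
    rw [Matrix.sub_mulVec, dotProduct_sub] at h0
    linarith
  have step3 : w ⬝ᵥ G *ᵥ w = a ⬝ᵥ G⁻¹ *ᵥ a := by
    rw [hw, my_conj_dot, hGit, Matrix.mul_assoc, ← Matrix.mul_assoc,
        Matrix.nonsing_inv_mul _ hGdet, Matrix.one_mul]
  have hR : 0 < x ⬝ᵥ Γ⁻¹ *ᵥ x := my_pd_pos hΓ.inv hx
  have step4 : a ⬝ᵥ G⁻¹ *ᵥ a < x ⬝ᵥ Γ⁻¹ *ᵥ x := by
    by_cases hw0 : w = 0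
    · have : a ⬝ᵥ G⁻¹ *ᵥ a = 0 := by rw [← hw, hw0, dotProduct_zero]
      rw [this]; exact hR
    · set z := Amᵀ *ᵥ w with hz
      have cs := my_psd_cs hΓ.posSemidef z (Γ⁻¹ *ᵥ x)
      have e1 : Γ *ᵥ (Γ⁻¹ *ᵥ x) = x := by
        rw [Matrix.mulVec_mulVec, Matrix.mul_nonsing_inv _ hΓdet, Matrix.one_mulVec]
      have e2 : (Γ⁻¹ *ᵥ x) ⬝ᵥ Γ *ᵥ (Γ⁻¹ *ᵥ x) = x ⬝ᵥ Γ⁻¹ *ᵥ x := by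
        rw [my_conj_dot, hΓit, Matrix.mul_assoc, ← Matrix.mul_assoc,
            Matrix.nonsing_inv_mul _ hΓdet, Matrix.one_mul]
      rw [e1, dotProduct_comm (Γ⁻¹ *ᵥ x) x] at cs
      have e3 : z ⬝ᵥ x = a ⬝ᵥ G⁻¹ *ᵥ a := by
        rw [hz, my_dot_mulVec_left, Matrix.transpose_transpose, ← ha, ← hw,
            dotProduct_comm]
      have e4 : z ⬝ᵥ Γ *ᵥ z = w ⬝ᵥ (Am * Γ * Amᵀ) *ᵥ w := by
        rw [hz, my_conj_dot, Matrix.transpose_transpose]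
      have e5 : w ⬝ᵥ G *ᵥ w = w ⬝ᵥ (Am * Γ * Amᵀ) *ᵥ w + w ⬝ᵥ Qm *ᵥ w := by
        rw [hGeq, Matrix.add_mulVec, dotProduct_add]
      have hq : 0 < w ⬝ᵥ Qm *ᵥ w := my_pd_pos hQ hw0
      have hL : 0 < a ⬝ᵥ G⁻¹ *ᵥ a := by rw [← step3]; exact my_pd_pos hGpd hw0
      rw [e3, e4] at cs
      nlinarith [cs, hq, hL, hR, step3, e5]
  rw [step1]
  calc w ⬝ᵥ Gp *ᵥ w ≤ w ⬝ᵥ G *ᵥ w := step2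
  _ = a ⬝ᵥ G⁻¹ *ᵥ a := step3
  _ < x ⬝ᵥ Γ⁻¹ *ᵥ x := step4

lemma my_kalman_le {Γ Qm G Gp Am : Matrix n n ℝ}
    (hΓ : Γ.PosDef) (hQ : Qm.PosDef) (hGeq : G = Am * Γ * Amᵀ + Qm)
    (hGp : Gp.PosDef) (hle : (G - Gp).PosSemidef) (x : n → ℝ) :
    ((Gp * G⁻¹) *ᵥ (Am *ᵥ x)) ⬝ᵥ Gp⁻¹ *ᵥ ((Gp * G⁻¹) *ᵥ (Am *ᵥ x)) ≤ x ⬝ᵥ Γ⁻¹ *ᵥ x := by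
  by_cases hx : x = 0
  · subst hx
    simp
  · exact le_of_lt (my_kalman_lt hΓ hQ hGeq hGp hle hx)

end Aux4

section Aux5
variable {n o : Type*} [Fintype n] [Fintype o] [DecidableEq n]

lemma my_consensus_dot {G : Matrix n n ℝ} (hGt : Gᵀ = G) (hGdet : IsUnit G.det)
    (B : Matrix o n ℝ) (γ : ℝ) (v : o → ℝ) (w : n → ℝ) :
    (γ • (G * Bᵀ) *ᵥ v) ⬝ᵥ (G⁻¹ *ᵥ w) = γ * (v ⬝ᵥ B *ᵥ w) := by
  rw [smul_dotProduct, smul_eq_mul]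
  congr 1
  rw [my_dot_mulVec_left, Matrix.transpose_mul, Matrix.transpose_transpose,
      Matrix.mulVec_mulVec, hGt, Matrix.mul_nonsing_inv_cancel_right _ _ hGdet]

lemma my_consensus_quad (G P : Matrix n n ℝ) (B : Matrix o n ℝ) (γ : ℝ) (v : o → ℝ) :
    (γ • (G * Bᵀ) *ᵥ v) ⬝ᵥ P *ᵥ (γ • (G * Bᵀ) *ᵥ v) =
      γ ^ 2 * (v ⬝ᵥ ((G * Bᵀ)ᵀ * P * (G * Bᵀ)) *ᵥ v) := by
  rw [smul_dotProduct, Matrix.mulVec_smul, dotProduct_smul, smul_eq_mul, smul_eq_mul,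
      my_conj_dot]
  ring

lemma my_neg_quad (M : Matrix o o ℝ) (v : o → ℝ) :
    (-v) ⬝ᵥ M *ᵥ (-v) = v ⬝ᵥ M *ᵥ v := by
  rw [Matrix.mulVec_neg, dotProduct_neg, neg_dotProduct, neg_neg]

end Aux5

end AuxAll

set_option maxHeartbeats 1600000 in
/-- Appendix E / `ap:deltaV`: for sufficiently small positive scaling
factors, the common Lyapunov function of the DLKCF decreases at a rate proportional
to the total neighbor disagreement:
`V_k − V_{k−1} < −√2 · Σ_î γ^{î+1}_{î,k} ‖u^{î+1}_{î,k}‖²`. -/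
theorem stmt5
    (N : ℕ) (hN : 2 ≤ N)
    (Δt Δx vm w : ℝ) (hΔt : 0 < Δt) (hΔx : 0 < Δx) (hvm : 0 < vm) (hw : 0 < w)
    (hv1 : vm * Δt / Δx < 1) (hw1 : w * Δt / Δx < 1)
    (q1 q2 r1 r2 : ℝ) (hq0 : 0 < q1) (hq : q1 < q2) (hr0 : 0 < r1) (hr : r1 < r2)
    (nd : ℕ → ℕ) (hnd : ∀ i, i < N → 2 ≤ nd i)
    (ov : ℕ → ℕ) (hov : ∀ i, i + 1 < N → 1 ≤ ov i ∧ ov i ≤ min (nd i) (nd (i + 1)))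
    (A : (i : ℕ) → ℕ → Matrix (Fin (nd i)) (Fin (nd i)) ℝ)
    (hA : ∀ i k, i < N → A i k ∈ setAO (nd i) (vm * Δt / Δx) (w * Δt / Δx))
    (md : ℕ → ℕ → ℕ)
    (H : (i k : ℕ) → Matrix (Fin (md i k)) (Fin (nd i)) ℝ)
    (hH : ∀ i k, i < N → standingH (H i k))
    (Q : (i : ℕ) → ℕ → Matrix (Fin (nd i)) (Fin (nd i)) ℝ)
    (R : (i k : ℕ) → Matrix (Fin (md i k)) (Fin (md i k)) ℝ)
    (hQ : ∀ i k, i < N → loewnerLT (q1 • 1) (Q i k) ∧ loewnerLT (Q i k) (q2 • 1))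
    (hR : ∀ i k, i < N → loewnerLT (r1 • 1) (R i k) ∧ loewnerLT (R i k) (r2 • 1))
    (Γpost Γprior : (i : ℕ) → ℕ → Matrix (Fin (nd i)) (Fin (nd i)) ℝ)
    (K : (i k : ℕ) → Matrix (Fin (nd i)) (Fin (md i k)) ℝ)
    (hΓ0 : ∀ i, i < N → (Γpost i 0).PosDef)
    (hprior : ∀ i k, i < N →
      Γprior i (k + 1) = A i k * Γpost i k * (A i k)ᵀ + Q i k)
    (hK : ∀ i k, i < N → K i (k + 1) = Γprior i (k + 1) * (H i (k + 1))ᵀ *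
        (R i (k + 1) + H i (k + 1) * Γprior i (k + 1) * (H i (k + 1))ᵀ)⁻¹)
    (hpost : ∀ i k, i < N →
      Γpost i (k + 1) = Γprior i (k + 1) - K i (k + 1) * H i (k + 1) * Γprior i (k + 1)) :
    ∃ γstar : ℕ → ℕ → ℝ, (∀ i k, 0 < γstar i k) ∧
      ∀ γE : ℕ → ℕ → ℝ,
        (∀ i k, 0 < γE i k) →
        (∀ i k, i + 1 < N →
          γE i (k + 1) < γstar i (k + 1) ∧ γE i (k + 1) < γstar (i + 1) (k + 1)) →
        ∀ η : (i : ℕ) → ℕ → (Fin (nd i) → ℝ),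
          (∀ i, i < N → ∀ k,
            η i (k + 1) =
              (1 - K i (k + 1) * H i (k + 1)).mulVec ((A i k).mulVec (η i k))
              + (if 1 ≤ i then
                  γE (i - 1) (k + 1) •
                    (Γprior i (k + 1) * (selLeft (ov (i - 1)) (nd i))ᵀ).mulVec
                      ((selRight (ov (i - 1)) (nd (i - 1))).mulVec
                          ((A (i - 1) k).mulVec (η (i - 1) k)) -
                        (selLeft (ov (i - 1)) (nd i)).mulVec ((A i k).mulVec (η i k)))
                 else 0)
              + (if i + 1 < N then
                  γE i (k + 1) •
                    (Γprior i (k + 1) * (selRight (ov i) (nd i))ᵀ).mulVec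
                      ((selLeft (ov i) (nd (i + 1))).mulVec
                          ((A (i + 1) k).mulVec (η (i + 1) k)) -
                        (selRight (ov i) (nd i)).mulVec ((A i k).mulVec (η i k)))
                 else 0)) →
          ∀ k, (∃ i, i < N ∧ η i k ≠ 0) →
            (∑ i ∈ Finset.range N,
                (η i (k + 1)) ⬝ᵥ ((Γpost i (k + 1))⁻¹).mulVec (η i (k + 1))) -
              (∑ i ∈ Finset.range N, (η i k) ⬝ᵥ ((Γpost i k)⁻¹).mulVec (η i k)) <
            -(Real.sqrt 2) *
              ∑ ihat ∈ Finset.range (N - 1), γE ihat (k + 1) *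
                (∑ x, ((selLeft (ov ihat) (nd (ihat + 1))).mulVec
                      ((A (ihat + 1) k).mulVec (η (ihat + 1) k)) x -
                    (selRight (ov ihat) (nd ihat)).mulVec
                      ((A ihat k).mulVec (η ihat k)) x) ^ 2) := by
  classical
  have hN1 : N - 1 + 1 = N := by omega
  have hQpd : ∀ i kk, i < N → (Q i kk).PosDef := by
    intro i kk hi
    have h : (Q i kk - q1 • 1).PosDef := (hQ i kk hi).1
    have h2 := h.add_posSemidef (my_smul_one_posdef hq0).posSemidef
    simpa using h2
  have hRpd : ∀ i kk, i < N → (R i kk).PosDef := by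
    intro i kk hi
    have h : (R i kk - r1 • 1).PosDef := (hR i kk hi).1
    have h2 := h.add_posSemidef (my_smul_one_posdef hr0).posSemidef
    simpa using h2
  have hpostPD : ∀ i, i < N → ∀ kk, (Γpost i kk).PosDef := by
    intro i hi kk
    induction kk with
    | zero => exact hΓ0 i hi
    | succ kk ih =>
      have hGpd : (Γprior i (kk + 1)).PosDef := by
        rw [hprior i kk hi]
        have hps : (A i kk * Γpost i kk * (A i kk)ᵀ).PosSemidef := by
          have := ih.posSemidef.mul_mul_conjTranspose_same (A i kk)
          rwa [conjTranspose_eq_transpose_of_trivial] at this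
        exact Matrix.PosDef.posSemidef_add hps (hQpd i kk hi)
      rw [hpost i kk hi, hK i kk hi]
      exact my_post_posdef hGpd (hRpd i (kk + 1) hi)
  have hpriorPD : ∀ i kk, i < N → (Γprior i (kk + 1)).PosDef := by
    intro i kk hi
    rw [hprior i kk hi]
    have hps : (A i kk * Γpost i kk * (A i kk)ᵀ).PosSemidef := by
      have := (hpostPD i hi kk).posSemidef.mul_mul_conjTranspose_same (A i kk)
      rwa [conjTranspose_eq_transpose_of_trivial] at this
    exact Matrix.PosDef.posSemidef_add hps (hQpd i kk hi)
  have hsubPSD : ∀ i kk, i < N → (Γprior i (kk + 1) - Γpost i (kk + 1)).PosSemidef := by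
    intro i kk hi
    rw [hpost i kk hi, hK i kk hi]
    exact my_post_sub_psd (hpriorPD i kk hi) (hRpd i (kk + 1) hi)
  have hFeq : ∀ i kk, i < N →
      (1 - K i (kk + 1) * H i (kk + 1)) = Γpost i (kk + 1) * (Γprior i (kk + 1))⁻¹ := by
    intro i kk hi
    have hdet : IsUnit (Γprior i (kk + 1)).det :=
      (Matrix.isUnit_iff_isUnit_det _).mp (hpriorPD i kk hi).isUnit
    have h1 : (1 - K i (kk + 1) * H i (kk + 1)) * Γprior i (kk + 1) = Γpost i (kk + 1) := by
      rw [Matrix.sub_mul, Matrix.one_mul, hpost i kk hi]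
    rw [← h1, Matrix.mul_nonsing_inv_cancel_right _ _ hdet]
  have hs2 : Real.sqrt 2 < 2 := by
    nlinarith [Real.sq_sqrt (by norm_num : (0:ℝ) ≤ 2), Real.sqrt_nonneg 2]
  set DD : ℕ → ℕ → ℝ := fun i m =>
    2 * ((∑ p, ∑ q, abs ((((Γprior i m * (selRight (ov i) (nd i))ᵀ)ᵀ * (Γpost i m)⁻¹ *
            (Γprior i m * (selRight (ov i) (nd i))ᵀ)) p q)) +
         (∑ p, ∑ q, abs ((((Γprior (i + 1) m * (selLeft (ov i) (nd (i + 1)))ᵀ)ᵀ *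
            (Γpost (i + 1) m)⁻¹ *
            (Γprior (i + 1) m * (selLeft (ov i) (nd (i + 1)))ᵀ)) p q))))) with hDDdef
  have hDD0 : ∀ i m, 0 ≤ DD i m := by
    intro i m
    have h1 : (0:ℝ) ≤ ∑ p, ∑ q, abs ((((Γprior i m * (selRight (ov i) (nd i))ᵀ)ᵀ *
        (Γpost i m)⁻¹ * (Γprior i m * (selRight (ov i) (nd i))ᵀ)) p q)) :=
      Finset.sum_nonneg fun p _ => Finset.sum_nonneg fun q _ => abs_nonneg _
    have h2 : (0:ℝ) ≤ ∑ p, ∑ q, abs ((((Γprior (i + 1) m * (selLeft (ov i) (nd (i + 1)))ᵀ)ᵀ *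
        (Γpost (i + 1) m)⁻¹ *
        (Γprior (i + 1) m * (selLeft (ov i) (nd (i + 1)))ᵀ)) p q)) :=
      Finset.sum_nonneg fun p _ => Finset.sum_nonneg fun q _ => abs_nonneg _
    rw [hDDdef]
    dsimp only
    linarith
  refine ⟨fun i m => (2 - Real.sqrt 2) / (1 + DD i m), ?_, ?_⟩
  · intro i m
    exact div_pos (by linarith) (by linarith [hDD0 i m])
  intro γE hγpos hγcond η hη k hk
  obtain ⟨a, ha⟩ : ∃ a : (i : ℕ) → (Fin (nd i) → ℝ), ∀ i, a i = (A i k) *ᵥ (η i k) :=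
    ⟨_, fun _ => rfl⟩
  obtain ⟨u, hu⟩ : ∃ u : (j : ℕ) → (Fin (ov j) → ℝ), ∀ j,
      u j = (selLeft (ov j) (nd (j + 1))) *ᵥ a (j + 1) - (selRight (ov j) (nd j)) *ᵥ a j :=
    ⟨_, fun _ => rfl⟩
  obtain ⟨f, hf⟩ : ∃ f : (i : ℕ) → (Fin (nd i) → ℝ), ∀ i,
      f i = (1 - K i (k + 1) * H i (k + 1)) *ᵥ a i := ⟨_, fun _ => rfl⟩
  obtain ⟨sL, hsL⟩ : ∃ sL : (i : ℕ) → (Fin (nd i) → ℝ), ∀ i,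
      sL i = if 1 ≤ i then
          γE (i - 1) (k + 1) • (Γprior i (k + 1) * (selLeft (ov (i - 1)) (nd i))ᵀ) *ᵥ
            ((selRight (ov (i - 1)) (nd (i - 1))) *ᵥ a (i - 1) -
              (selLeft (ov (i - 1)) (nd i)) *ᵥ a i)
        else 0 := ⟨_, fun _ => rfl⟩
  obtain ⟨sR, hsR⟩ : ∃ sR : (i : ℕ) → (Fin (nd i) → ℝ), ∀ i,
      sR i = if i + 1 < N then
          γE i (k + 1) • (Γprior i (k + 1) * (selRight (ov i) (nd i))ᵀ) *ᵥ
            ((selLeft (ov i) (nd (i + 1))) *ᵥ a (i + 1) - (selRight (ov i) (nd i)) *ᵥ a i)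
        else 0 := ⟨_, fun _ => rfl⟩
  have hsL0 : sL 0 = 0 := by rw [hsL 0]; exact if_neg (by omega)
  have hsLs : ∀ j : ℕ, sL (j + 1) = γE j (k + 1) •
      (Γprior (j + 1) (k + 1) * (selLeft (ov j) (nd (j + 1)))ᵀ) *ᵥ
      ((selRight (ov j) (nd j)) *ᵥ a j - (selLeft (ov j) (nd (j + 1))) *ᵥ a (j + 1)) := by
    intro j
    rw [hsL (j + 1)]
    exact if_pos (by omega)
  have heq : ∀ i, i < N → η i (k + 1) = f i + (sL i + sR i) := by
    intro i hi
    rw [hf i, hsL i, hsR i]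
    simp only [ha]
    rw [← add_assoc]
    exact hη i hi k
  have hPsym : ∀ i, i < N → ((Γpost i (k + 1))⁻¹)ᵀ = (Γpost i (k + 1))⁻¹ :=
    fun i hi => my_herm_tr (hpostPD i hi (k + 1)).inv.isHermitian
  have hGsym : ∀ i, i < N → (Γprior i (k + 1))ᵀ = Γprior i (k + 1) :=
    fun i hi => my_herm_tr (hpriorPD i k hi).isHermitian
  have hGdet : ∀ i, i < N → IsUnit (Γprior i (k + 1)).det :=
    fun i hi => (Matrix.isUnit_iff_isUnit_det _).mp (hpriorPD i k hi).isUnit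
  have hpostdet : ∀ i, i < N → IsUnit (Γpost i (k + 1)).det :=
    fun i hi => (Matrix.isUnit_iff_isUnit_det _).mp (hpostPD i hi (k + 1)).isUnit
  have hPf : ∀ i, i < N →
      (Γpost i (k + 1))⁻¹ *ᵥ f i = (Γprior i (k + 1))⁻¹ *ᵥ a i := by
    intro i hi
    rw [hf i, hFeq i k hi, Matrix.mulVec_mulVec, ← Matrix.mul_assoc,
        Matrix.nonsing_inv_mul _ (hpostdet i hi), Matrix.one_mul]
  have hexpand : ∀ i ∈ Finset.range N,
      (η i (k + 1)) ⬝ᵥ ((Γpost i (k + 1))⁻¹) *ᵥ (η i (k + 1)) =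
        f i ⬝ᵥ ((Γpost i (k + 1))⁻¹) *ᵥ f i
        + 2 * ((sL i + sR i) ⬝ᵥ ((Γprior i (k + 1))⁻¹ *ᵥ a i))
        + (sL i + sR i) ⬝ᵥ ((Γpost i (k + 1))⁻¹) *ᵥ (sL i + sR i) := by
    intro i hi
    rw [Finset.mem_range] at hi
    rw [heq i hi, my_quad_expand (hPsym i hi), hPf i hi]
  have hsum1 : (∑ i ∈ Finset.range N, (η i (k + 1)) ⬝ᵥ ((Γpost i (k + 1))⁻¹) *ᵥ (η i (k + 1))) =
      (∑ i ∈ Finset.range N, f i ⬝ᵥ ((Γpost i (k + 1))⁻¹) *ᵥ f i)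
      + 2 * (∑ i ∈ Finset.range N, (sL i + sR i) ⬝ᵥ ((Γprior i (k + 1))⁻¹ *ᵥ a i))
      + ∑ i ∈ Finset.range N, (sL i + sR i) ⬝ᵥ ((Γpost i (k + 1))⁻¹) *ᵥ (sL i + sR i) := by
    rw [Finset.sum_congr rfl hexpand, Finset.sum_add_distrib, Finset.sum_add_distrib,
        Finset.mul_sum]
  have hmain : (∑ i ∈ Finset.range N, f i ⬝ᵥ ((Γpost i (k + 1))⁻¹) *ᵥ f i)
      < ∑ i ∈ Finset.range N, (η i k) ⬝ᵥ ((Γpost i k)⁻¹) *ᵥ (η i k) := by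
    obtain ⟨i0, hi0, hne⟩ := hk
    apply Finset.sum_lt_sum
    · intro i hi
      rw [Finset.mem_range] at hi
      rw [hf i, hFeq i k hi, ha i]
      exact my_kalman_le (hpostPD i hi k) (hQpd i k hi) (hprior i k hi)
        (hpostPD i hi (k + 1)) (hsubPSD i k hi) (η i k)
    · refine ⟨i0, Finset.mem_range.mpr hi0, ?_⟩
      rw [hf i0, hFeq i0 k hi0, ha i0]
      exact my_kalman_lt (hpostPD i0 hi0 k) (hQpd i0 k hi0) (hprior i0 k hi0)
        (hpostPD i0 hi0 (k + 1)) (hsubPSD i0 k hi0) hne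
  have hSR : (∑ i ∈ Finset.range N, sR i ⬝ᵥ ((Γprior i (k + 1))⁻¹ *ᵥ a i)) =
      ∑ j ∈ Finset.range (N - 1), γE j (k + 1) * (u j ⬝ᵥ (selRight (ov j) (nd j)) *ᵥ a j) := by
    conv_lhs => rw [← hN1]
    rw [Finset.sum_range_succ]
    have hlast : sR (N - 1) ⬝ᵥ ((Γprior (N - 1) (k + 1))⁻¹ *ᵥ a (N - 1)) = 0 := by
      rw [hsR (N - 1), if_neg (by omega), zero_dotProduct]
    rw [hlast, add_zero]
    refine Finset.sum_congr rfl fun j hj => ?_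
    rw [Finset.mem_range] at hj
    have hjN : j + 1 < N := by omega
    rw [hsR j, if_pos hjN, ← hu j]
    exact my_consensus_dot (hGsym j (by omega)) (hGdet j (by omega)) _ _ _ _
  have hSL : (∑ i ∈ Finset.range N, sL i ⬝ᵥ ((Γprior i (k + 1))⁻¹ *ᵥ a i)) =
      ∑ j ∈ Finset.range (N - 1),
        -(γE j (k + 1) * (u j ⬝ᵥ (selLeft (ov j) (nd (j + 1))) *ᵥ a (j + 1))) := by
    conv_lhs => rw [← hN1]
    rw [Finset.sum_range_succ']
    have h0 : sL 0 ⬝ᵥ ((Γprior 0 (k + 1))⁻¹ *ᵥ a 0) = 0 := by rw [hsL0, zero_dotProduct]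
    rw [h0, add_zero]
    refine Finset.sum_congr rfl fun j hj => ?_
    rw [Finset.mem_range] at hj
    have hjN : j + 1 < N := by omega
    rw [hsLs j]
    have hneg : (selRight (ov j) (nd j)) *ᵥ a j - (selLeft (ov j) (nd (j + 1))) *ᵥ a (j + 1)
        = -(u j) := by rw [hu j]; abel
    rw [hneg, my_consensus_dot (hGsym (j + 1) (by omega)) (hGdet (j + 1) (by omega)),
        neg_dotProduct]
    ring
  have hcross : (∑ i ∈ Finset.range N, (sL i + sR i) ⬝ᵥ ((Γprior i (k + 1))⁻¹ *ᵥ a i)) =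
      -(∑ j ∈ Finset.range (N - 1), γE j (k + 1) * (u j ⬝ᵥ u j)) := by
    have e : ∀ i ∈ Finset.range N, (sL i + sR i) ⬝ᵥ ((Γprior i (k + 1))⁻¹ *ᵥ a i) =
        sL i ⬝ᵥ ((Γprior i (k + 1))⁻¹ *ᵥ a i) + sR i ⬝ᵥ ((Γprior i (k + 1))⁻¹ *ᵥ a i) :=
      fun i _ => add_dotProduct _ _ _
    rw [Finset.sum_congr rfl e, Finset.sum_add_distrib, hSL, hSR, ← Finset.sum_neg_distrib,
        ← Finset.sum_add_distrib]
    refine Finset.sum_congr rfl fun j hj => ?_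
    rw [hu j]
    simp only [dotProduct_sub, sub_dotProduct]
    ring
  have hquadle : ∀ i ∈ Finset.range N,
      (sL i + sR i) ⬝ᵥ ((Γpost i (k + 1))⁻¹) *ᵥ (sL i + sR i) ≤
        2 * (sL i ⬝ᵥ ((Γpost i (k + 1))⁻¹) *ᵥ sL i)
        + 2 * (sR i ⬝ᵥ ((Γpost i (k + 1))⁻¹) *ᵥ sR i) := by
    intro i hi
    rw [Finset.mem_range] at hi
    exact my_quad_add_le (hpostPD i hi (k + 1)).inv.posSemidef _ _
  have hQLsum : (∑ i ∈ Finset.range N, 2 * (sL i ⬝ᵥ ((Γpost i (k + 1))⁻¹) *ᵥ sL i)) =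
      ∑ j ∈ Finset.range (N - 1), 2 * (sL (j + 1) ⬝ᵥ ((Γpost (j + 1) (k + 1))⁻¹) *ᵥ sL (j + 1)) := by
    conv_lhs => rw [← hN1]
    rw [Finset.sum_range_succ']
    have h0 : 2 * (sL 0 ⬝ᵥ ((Γpost 0 (k + 1))⁻¹) *ᵥ sL 0) = 0 := by
      rw [hsL0, zero_dotProduct, mul_zero]
    rw [h0, add_zero]
  have hQRsum : (∑ i ∈ Finset.range N, 2 * (sR i ⬝ᵥ ((Γpost i (k + 1))⁻¹) *ᵥ sR i)) =
      ∑ j ∈ Finset.range (N - 1), 2 * (sR j ⬝ᵥ ((Γpost j (k + 1))⁻¹) *ᵥ sR j) := by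
    conv_lhs => rw [← hN1]
    rw [Finset.sum_range_succ]
    have h0 : 2 * (sR (N - 1) ⬝ᵥ ((Γpost (N - 1) (k + 1))⁻¹) *ᵥ sR (N - 1)) = 0 := by
      rw [hsR (N - 1), if_neg (by omega), zero_dotProduct, mul_zero]
    rw [h0, add_zero]
  have hDDexp : ∀ j, j + 1 < N → DD j (k + 1) =
      2 * ((∑ p, ∑ q, abs ((((Γprior j (k + 1) * (selRight (ov j) (nd j))ᵀ)ᵀ * (Γpost j (k + 1))⁻¹ *
            (Γprior j (k + 1) * (selRight (ov j) (nd j))ᵀ)) p q)) +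
         (∑ p, ∑ q, abs ((((Γprior (j + 1) (k + 1) * (selLeft (ov j) (nd (j + 1)))ᵀ)ᵀ *
            (Γpost (j + 1) (k + 1))⁻¹ *
            (Γprior (j + 1) (k + 1) * (selLeft (ov j) (nd (j + 1)))ᵀ)) p q))))) := by
    intro j _
    rw [hDDdef]
  have hγDD : ∀ j, j + 1 < N → γE j (k + 1) * DD j (k + 1) ≤ 2 - Real.sqrt 2 := by
    intro j hjN
    have h1 : γE j (k + 1) < (2 - Real.sqrt 2) / (1 + DD j (k + 1)) := (hγcond j k hjN).1
    have hD := hDD0 j (k + 1)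
    have hpos : (0:ℝ) < 1 + DD j (k + 1) := by linarith
    have h2 : γE j (k + 1) * (1 + DD j (k + 1)) < 2 - Real.sqrt 2 :=
      (lt_div_iff₀ hpos).mp h1
    have h3 := (hγpos j (k + 1))
    nlinarith
  have hquad : (∑ i ∈ Finset.range N, (sL i + sR i) ⬝ᵥ ((Γpost i (k + 1))⁻¹) *ᵥ (sL i + sR i))
      ≤ ∑ j ∈ Finset.range (N - 1),
          (2 - Real.sqrt 2) * (γE j (k + 1) * (u j ⬝ᵥ u j)) := by
    have step1 := Finset.sum_le_sum hquadle
    rw [Finset.sum_add_distrib, hQLsum, hQRsum, ← Finset.sum_add_distrib] at step1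
    refine le_trans step1 (Finset.sum_le_sum fun j hj => ?_)
    rw [Finset.mem_range] at hj
    have hjN : j + 1 < N := by omega
    have hγ := hγpos j (k + 1)
    have hUUnn : (0:ℝ) ≤ ∑ x, (u j x) ^ 2 := Finset.sum_nonneg fun x _ => sq_nonneg _
    -- left consensus term
    have hLq : sL (j + 1) ⬝ᵥ ((Γpost (j + 1) (k + 1))⁻¹) *ᵥ sL (j + 1) =
        (γE j (k + 1)) ^ 2 *
          (u j ⬝ᵥ (((Γprior (j + 1) (k + 1) * (selLeft (ov j) (nd (j + 1)))ᵀ)ᵀ *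
            (Γpost (j + 1) (k + 1))⁻¹ *
            (Γprior (j + 1) (k + 1) * (selLeft (ov j) (nd (j + 1)))ᵀ)) *ᵥ u j)) := by
      have hneg : (selRight (ov j) (nd j)) *ᵥ a j - (selLeft (ov j) (nd (j + 1))) *ᵥ a (j + 1)
          = -(u j) := by rw [hu j]; abel
      rw [hsLs j, hneg, my_consensus_quad, my_neg_quad]
    have hRq : sR j ⬝ᵥ ((Γpost j (k + 1))⁻¹) *ᵥ sR j =
        (γE j (k + 1)) ^ 2 *
          (u j ⬝ᵥ (((Γprior j (k + 1) * (selRight (ov j) (nd j))ᵀ)ᵀ * (Γpost j (k + 1))⁻¹ *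
            (Γprior j (k + 1) * (selRight (ov j) (nd j))ᵀ)) *ᵥ u j)) := by
      rw [hsR j, if_pos hjN, ← hu j, my_consensus_quad]
    have hMl := my_quad_le_sumAbs
      (((Γprior (j + 1) (k + 1) * (selLeft (ov j) (nd (j + 1)))ᵀ)ᵀ *
        (Γpost (j + 1) (k + 1))⁻¹ *
        (Γprior (j + 1) (k + 1) * (selLeft (ov j) (nd (j + 1)))ᵀ))) (u j)
    have hMr := my_quad_le_sumAbs
      (((Γprior j (k + 1) * (selRight (ov j) (nd j))ᵀ)ᵀ * (Γpost j (k + 1))⁻¹ *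
        (Γprior j (k + 1) * (selRight (ov j) (nd j))ᵀ))) (u j)
    have hUUeq : u j ⬝ᵥ u j = ∑ x, (u j x) ^ 2 := by
      simp [dotProduct, pow_two]
    have hDexp := hDDexp j hjN
    have hγD := hγDD j hjN
    rw [hLq, hRq, hUUeq]
    set S := ∑ x, (u j x) ^ 2 with hS
    set vL := u j ⬝ᵥ (((Γprior (j + 1) (k + 1) * (selLeft (ov j) (nd (j + 1)))ᵀ)ᵀ *
            (Γpost (j + 1) (k + 1))⁻¹ *
            (Γprior (j + 1) (k + 1) * (selLeft (ov j) (nd (j + 1)))ᵀ)) *ᵥ u j) with hvL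
    set vR := u j ⬝ᵥ (((Γprior j (k + 1) * (selRight (ov j) (nd j))ᵀ)ᵀ * (Γpost j (k + 1))⁻¹ *
            (Γprior j (k + 1) * (selRight (ov j) (nd j))ᵀ)) *ᵥ u j) with hvR
    set cL := ∑ p, ∑ q, abs ((((Γprior (j + 1) (k + 1) * (selLeft (ov j) (nd (j + 1)))ᵀ)ᵀ *
            (Γpost (j + 1) (k + 1))⁻¹ *
            (Γprior (j + 1) (k + 1) * (selLeft (ov j) (nd (j + 1)))ᵀ)) p q)) with hcL
    set cR := ∑ p, ∑ q, abs ((((Γprior j (k + 1) * (selRight (ov j) (nd j))ᵀ)ᵀ *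
            (Γpost j (k + 1))⁻¹ *
            (Γprior j (k + 1) * (selRight (ov j) (nd j))ᵀ)) p q)) with hcR
    have hvLle : vL ≤ cL * S := hMl
    have hvRle : vR ≤ cR * S := hMr
    have hDval : DD j (k + 1) = 2 * (cR + cL) := hDexp
    have hsq : (0:ℝ) ≤ (γE j (k + 1)) ^ 2 := sq_nonneg _
    have e1 : (γE j (k + 1)) ^ 2 * vL ≤ (γE j (k + 1)) ^ 2 * (cL * S) :=
      mul_le_mul_of_nonneg_left hvLle hsq
    have e2 : (γE j (k + 1)) ^ 2 * vR ≤ (γE j (k + 1)) ^ 2 * (cR * S) :=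
      mul_le_mul_of_nonneg_left hvRle hsq
    have key : 2 * ((γE j (k + 1)) ^ 2 * (cL * S)) + 2 * ((γE j (k + 1)) ^ 2 * (cR * S)) =
        (γE j (k + 1) * DD j (k + 1)) * (γE j (k + 1) * S) := by
      rw [hDval]; ring
    have hge : 0 ≤ γE j (k + 1) * S := mul_nonneg (le_of_lt hγ) hUUnn
    have key2 : (γE j (k + 1) * DD j (k + 1)) * (γE j (k + 1) * S) ≤
        (2 - Real.sqrt 2) * (γE j (k + 1) * S) := mul_le_mul_of_nonneg_right hγD hge
    linarith
  have hUUsum : ∀ j : ℕ,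
      (∑ x, (((selLeft (ov j) (nd (j + 1))) *ᵥ ((A (j + 1) k) *ᵥ (η (j + 1) k))) x
        - ((selRight (ov j) (nd j)) *ᵥ ((A j k) *ᵥ (η j k))) x) ^ 2) = u j ⬝ᵥ u j := by
    intro j
    rw [hu j, ha (j + 1), ha j]
    simp only [dotProduct, Pi.sub_apply, pow_two]
  rw [hsum1, hcross]
  have hrhs : (-(Real.sqrt 2) *
      ∑ ihat ∈ Finset.range (N - 1), γE ihat (k + 1) *
        (∑ x, ((selLeft (ov ihat) (nd (ihat + 1))).mulVec
              ((A (ihat + 1) k).mulVec (η (ihat + 1) k)) x -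
            (selRight (ov ihat) (nd ihat)).mulVec
              ((A ihat k).mulVec (η ihat k)) x) ^ 2)) =
      -(Real.sqrt 2) * ∑ j ∈ Finset.range (N - 1), γE j (k + 1) * (u j ⬝ᵥ u j) := by
    congr 1
    exact Finset.sum_congr rfl fun j _ => by rw [hUUsum j]
  rw [hrhs]
  have hWnn : (0:ℝ) ≤ ∑ j ∈ Finset.range (N - 1), γE j (k + 1) * (u j ⬝ᵥ u j) := by
    refine Finset.sum_nonneg fun j hj => ?_
    have h1 : (0:ℝ) ≤ u j ⬝ᵥ u j := by
      have : u j ⬝ᵥ u j = ∑ x, (u j x) ^ 2 := by simp [dotProduct, pow_two]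
      rw [this]; exact Finset.sum_nonneg fun x _ => sq_nonneg _
    exact mul_nonneg (le_of_lt (hγpos j (k + 1))) h1
  rw [← Finset.mul_sum] at hquad
  linarith [hmain, hquad]

end
end

section
/- For any integer ι ≥ 1 and any matrices M_1,…,M_ι ∈ 𝒜_O, the product P = M_ιM_{ι−1}⋯M_1 satisfies: (i) 0 ≤ P(r,c) ≤ 1 for all entries; (ii) P(r,c) = 0 whenever |r−c| > ι+1; (iii) every diagonal entry of PP^T is at most 2ι+1; and (iv) the largest eigenvalue of the positive semidefinite matrix PP^T (equivalently σ_max(P)²) is strictly less than 2(2ι+1). -/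
open Matrix Filter Finset

noncomputable section

/-- the product `M_b · M_{b−1} ⋯ M_1` (empty product = identity) -/
def prodSeq {N : ℕ} (M : ℕ → Matrix (Fin N) (Fin N) ℝ) : ℕ → Matrix (Fin N) (Fin N) ℝ
  | 0 => 1
  | b + 1 => M (b + 1) * prodSeq M b

/-- the stacked observability matrix with blocks `H_b, H_b M₁, H_b M₂M₁, …,
H_b M_T⋯M₁` -/
def stackObs (n T : ℕ) (M : ℕ → Matrix (Fin n) (Fin n) ℝ) :
    Matrix (Fin (2 * (T + 1))) (Fin n) ℝ :=
  Matrix.of fun r c =>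
    (matHb n * prodSeq M ((r : ℕ) / 2)) ⟨(r : ℕ) % 2, by omega⟩ c

section Stmt15Aux
set_option linter.unnecessarySeqFocus false
variable {n : ℕ}

lemma aux_sum_pair (f : Fin n → ℝ) (a b : Fin n) (hab : a ≠ b)
    (hz : ∀ j, j ≠ a → j ≠ b → f j = 0) : ∑ j, f j = f a + f b := by
  have h1 : ∑ j, f j = f a + ∑ j ∈ Finset.univ.erase a, f j :=
    (Finset.add_sum_erase _ f (Finset.mem_univ a)).symm
  have hb : b ∈ Finset.univ.erase a := Finset.mem_erase.2 ⟨hab.symm, Finset.mem_univ b⟩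
  have h2 : ∑ j ∈ Finset.univ.erase a, f j = f b + ∑ j ∈ (Finset.univ.erase a).erase b, f j :=
    (Finset.add_sum_erase _ f hb).symm
  have h3 : ∑ j ∈ (Finset.univ.erase a).erase b, f j = 0 := by
    apply Finset.sum_eq_zero
    intro j hj
    simp only [Finset.mem_erase, Finset.mem_univ, and_true] at hj
    exact hz j hj.2 hj.1
  rw [h1, h2, h3]; ring

lemma memAO_nonneg {θv θw : ℝ} (hv0 : 0 ≤ θv) (hv1 : θv ≤ 1) (hw0 : 0 ≤ θw) (hw1 : θw ≤ 1)
    {A : Matrix (Fin n) (Fin n) ℝ} (hA : A ∈ setAO n θv θw) (i j : Fin n) : 0 ≤ A i j := by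
  simp only [setAO, Set.mem_union, Set.mem_insert_iff, Set.mem_singleton_iff,
    Set.mem_setOf_eq] at hA
  rcases hA with (rfl | rfl) | ⟨s, hs1, hs2, rfl⟩ <;>
    simp only [matAFF, matACC, matACF, Matrix.of_apply] <;>
    split_ifs <;> linarith

lemma memAO_band {θv θw : ℝ}
    {A : Matrix (Fin n) (Fin n) ℝ} (hA : A ∈ setAO n θv θw) (i j : Fin n)
    (hij : (i : ℕ) + 1 < (j : ℕ) ∨ (j : ℕ) + 1 < (i : ℕ)) : A i j = 0 := by
  simp only [setAO, Set.mem_union, Set.mem_insert_iff, Set.mem_singleton_iff,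
    Set.mem_setOf_eq] at hA
  rcases hA with (rfl | rfl) | ⟨s, hs1, hs2, rfl⟩ <;>
    simp only [matAFF, matACC, matACF, Matrix.of_apply] <;>
    split_ifs <;> first
      | rfl
      | (exfalso; (try simp only [Fin.ext_iff, Fin.val_mk, and_true, true_and, and_false, false_and] at *) <;> omega)

set_option maxHeartbeats 1000000 in
lemma memAO_rowsum {θv θw : ℝ} (hv0 : 0 ≤ θv) (hv1 : θv ≤ 1) (hw0 : 0 ≤ θw) (hw1 : θw ≤ 1)
    (hn : 2 ≤ n)
    {A : Matrix (Fin n) (Fin n) ℝ} (hA : A ∈ setAO n θv θw) (i : Fin n) :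
    ∑ j, A i j ≤ 1 := by
  simp only [setAO, Set.mem_union, Set.mem_insert_iff, Set.mem_singleton_iff,
    Set.mem_setOf_eq] at hA
  rcases hA with (rfl | rfl) | ⟨s, hs1, hs2, rfl⟩
  · -- matAFF
    by_cases h0 : (i : ℕ) = 0
    · rw [aux_sum_pair _ (⟨0, by omega⟩ : Fin n) (⟨1, by omega⟩ : Fin n)
        (by simp only [ne_eq, Fin.ext_iff, Fin.val_mk]; omega)
        (by intro j hja hjb
            simp only [ne_eq, Fin.ext_iff] at hja hjb
            simp only [matAFF, Matrix.of_apply]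
            split_ifs <;> first | rfl | (exfalso; (try simp only [Fin.ext_iff, Fin.val_mk, and_true, true_and, and_false, false_and] at *) <;> omega))]
      simp only [matAFF, Matrix.of_apply]
      split_ifs <;> first | linarith | (exfalso; simp only [Fin.ext_iff, Fin.val_mk, and_true, true_and, and_false, false_and] at * <;> omega)
    · rw [aux_sum_pair _ i (⟨(i : ℕ) - 1, by omega⟩ : Fin n)
        (by simp only [ne_eq, Fin.ext_iff, Fin.val_mk]; omega)
        (by intro j hja hjb
            simp only [ne_eq, Fin.ext_iff] at hja hjb
            simp only [matAFF, Matrix.of_apply]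
            split_ifs <;> first | rfl | (exfalso; (try simp only [Fin.ext_iff, Fin.val_mk, and_true, true_and, and_false, false_and] at *) <;> omega))]
      simp only [matAFF, Matrix.of_apply]
      split_ifs <;> first | linarith | (exfalso; (try simp only [Fin.ext_iff, Fin.val_mk, and_true, true_and, and_false, false_and] at *) <;> omega)
  · -- matACC
    by_cases h0 : (i : ℕ) = n - 1
    · rw [aux_sum_pair _ (⟨n - 1, by omega⟩ : Fin n) (⟨n - 2, by omega⟩ : Fin n)
        (by simp only [ne_eq, Fin.ext_iff, Fin.val_mk]; omega)
        (by intro j hja hjb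
            simp only [ne_eq, Fin.ext_iff] at hja hjb
            simp only [matACC, Matrix.of_apply]
            split_ifs <;> first | rfl | (exfalso; (try simp only [Fin.ext_iff, Fin.val_mk, and_true, true_and, and_false, false_and] at *) <;> omega))]
      simp only [matACC, Matrix.of_apply]
      split_ifs <;> first | linarith | (exfalso; simp only [Fin.ext_iff, Fin.val_mk, and_true, true_and, and_false, false_and] at * <;> omega)
    · rw [aux_sum_pair _ i (⟨(i : ℕ) + 1, by omega⟩ : Fin n)
        (by simp only [ne_eq, Fin.ext_iff, Fin.val_mk]; omega)
        (by intro j hja hjb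
            simp only [ne_eq, Fin.ext_iff] at hja hjb
            simp only [matACC, Matrix.of_apply]
            split_ifs <;> first | rfl | (exfalso; (try simp only [Fin.ext_iff, Fin.val_mk, and_true, true_and, and_false, false_and] at *) <;> omega))]
      simp only [matACC, Matrix.of_apply]
      split_ifs <;> first | linarith | (exfalso; simp only [Fin.ext_iff, Fin.val_mk, and_true, true_and, and_false, false_and] at * <;> omega)
  · -- matACF
    by_cases h0 : (i : ℕ) < s
    · rw [aux_sum_pair _ i (⟨(i : ℕ) + 1, by omega⟩ : Fin n)
        (by simp only [ne_eq, Fin.ext_iff, Fin.val_mk]; omega)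
        (by intro j hja hjb
            simp only [ne_eq, Fin.ext_iff] at hja hjb
            simp only [matACF, Matrix.of_apply]
            split_ifs <;> first | rfl | (exfalso; simp only [Fin.ext_iff, Fin.val_mk, and_true, true_and, and_false, false_and] at * <;> omega))]
      simp only [matACF, Matrix.of_apply]
      split_ifs <;> first | linarith | (exfalso; simp only [Fin.ext_iff, Fin.val_mk, and_true, true_and, and_false, false_and] at * <;> omega)
    · rw [aux_sum_pair _ i (⟨(i : ℕ) - 1, by omega⟩ : Fin n)
        (by simp only [ne_eq, Fin.ext_iff, Fin.val_mk]; omega)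
        (by intro j hja hjb
            simp only [ne_eq, Fin.ext_iff] at hja hjb
            simp only [matACF, Matrix.of_apply]
            split_ifs <;> first | rfl | (exfalso; simp only [Fin.ext_iff, Fin.val_mk, and_true, true_and, and_false, false_and] at * <;> omega))]
      simp only [matACF, Matrix.of_apply]
      split_ifs <;> first | linarith | (exfalso; simp only [Fin.ext_iff, Fin.val_mk, and_true, true_and, and_false, false_and] at * <;> omega)

lemma good_mul {A P : Matrix (Fin n) (Fin n) ℝ} {k : ℕ}
    (hA0 : ∀ i j, 0 ≤ A i j) (hA1 : ∀ i, ∑ j, A i j ≤ 1)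
    (hAb : ∀ i j : Fin n, (i : ℕ) + 1 < (j : ℕ) ∨ (j : ℕ) + 1 < (i : ℕ) → A i j = 0)
    (hP0 : ∀ i j, 0 ≤ P i j) (hP1 : ∀ i, ∑ j, P i j ≤ 1)
    (hPb : ∀ i j : Fin n, (i : ℕ) + k < (j : ℕ) ∨ (j : ℕ) + k < (i : ℕ) → P i j = 0) :
    (∀ i j, 0 ≤ (A * P) i j) ∧ (∀ i, ∑ j, (A * P) i j ≤ 1) ∧
    (∀ i j : Fin n, (i : ℕ) + (k + 1) < (j : ℕ) ∨ (j : ℕ) + (k + 1) < (i : ℕ) →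
      (A * P) i j = 0) := by
  refine ⟨?_, ?_, ?_⟩
  · intro i j
    rw [Matrix.mul_apply]
    exact Finset.sum_nonneg fun l _ => mul_nonneg (hA0 i l) (hP0 l j)
  · intro i
    have h1 : ∑ j, (A * P) i j = ∑ l, A i l * ∑ j, P l j := by
      simp_rw [Matrix.mul_apply, Finset.mul_sum]
      exact Finset.sum_comm
    rw [h1]
    calc ∑ l, A i l * ∑ j, P l j ≤ ∑ l, A i l * 1 :=
          Finset.sum_le_sum fun l _ => mul_le_mul_of_nonneg_left (hP1 l) (hA0 i l)
      _ = ∑ l, A i l := by simp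
      _ ≤ 1 := hA1 i
  · intro i j hij
    rw [Matrix.mul_apply]
    apply Finset.sum_eq_zero
    intro l _
    rcases hij with h | h
    · by_cases hl : (i : ℕ) + 1 < (l : ℕ)
      · rw [hAb i l (Or.inl hl), zero_mul]
      · rw [hPb l j (Or.inl (by omega)), mul_zero]
    · by_cases hl : (l : ℕ) + 1 < (i : ℕ)
      · rw [hAb i l (Or.inr hl), zero_mul]
      · rw [hPb l j (Or.inr (by omega)), mul_zero]

lemma good_prod {θv θw : ℝ} (hv0 : 0 ≤ θv) (hv1 : θv ≤ 1) (hw0 : 0 ≤ θw) (hw1 : θw ≤ 1)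
    (hn : 2 ≤ n) (ι : ℕ) (M : ℕ → Matrix (Fin n) (Fin n) ℝ)
    (hM : ∀ κ, 1 ≤ κ → κ ≤ ι → M κ ∈ setAO n θv θw) :
    ∀ k, k ≤ ι →
      (∀ i j, 0 ≤ prodSeq M k i j) ∧ (∀ i, ∑ j, prodSeq M k i j ≤ 1) ∧
      (∀ i j : Fin n, (i : ℕ) + k < (j : ℕ) ∨ (j : ℕ) + k < (i : ℕ) → prodSeq M k i j = 0) := by
  intro k
  induction k with
  | zero =>
    intro _
    refine ⟨?_, ?_, ?_⟩
    · intro i j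
      simp only [prodSeq, Matrix.one_apply]
      split_ifs <;> norm_num
    · intro i
      simp only [prodSeq]
      simp [Finset.sum_ite_eq', Matrix.one_apply]
    · intro i j hij
      simp only [prodSeq, Matrix.one_apply]
      rw [if_neg]
      intro h
      subst h
      omega
  | succ m ih =>
    intro hm
    have hmem := hM (m + 1) (by omega) hm
    have ihh := ih (by omega)
    exact good_mul (memAO_nonneg hv0 hv1 hw0 hw1 hmem)
      (memAO_rowsum hv0 hv1 hw0 hw1 hn hmem)
      (memAO_band hmem) ihh.1 ihh.2.1 ihh.2.2

lemma colsum_le {P : Matrix (Fin n) (Fin n) ℝ} {k : ℕ}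
    (hP0 : ∀ i j, 0 ≤ P i j) (hPle1 : ∀ i j, P i j ≤ 1)
    (hPb : ∀ i j : Fin n, (i : ℕ) + k < (j : ℕ) ∨ (j : ℕ) + k < (i : ℕ) → P i j = 0)
    (c : Fin n) : ∑ r, P r c ≤ 2 * (k : ℝ) + 1 := by
  have h1 : ∑ r, P r c ≤
      ∑ r : Fin n, (if (c : ℕ) ≤ (r : ℕ) + k ∧ (r : ℕ) ≤ (c : ℕ) + k then (1 : ℝ) else 0) := by
    apply Finset.sum_le_sum
    intro r _
    by_cases h : (c : ℕ) ≤ (r : ℕ) + k ∧ (r : ℕ) ≤ (c : ℕ) + k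
    · rw [if_pos h]; exact hPle1 r c
    · rw [if_neg h, hPb r c (by omega)]
  have h2 : ∑ r : Fin n, (if (c : ℕ) ≤ (r : ℕ) + k ∧ (r : ℕ) ≤ (c : ℕ) + k then (1 : ℝ) else 0)
      = ((Finset.univ.filter
          (fun r : Fin n => (c : ℕ) ≤ (r : ℕ) + k ∧ (r : ℕ) ≤ (c : ℕ) + k)).card : ℝ) := by
    rw [Finset.sum_ite, Finset.sum_const, Finset.sum_const_zero, add_zero, nsmul_eq_mul, mul_one]
  have h3 : (Finset.univ.filter
      (fun r : Fin n => (c : ℕ) ≤ (r : ℕ) + k ∧ (r : ℕ) ≤ (c : ℕ) + k)).card ≤ 2 * k + 1 := by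
    have := Finset.card_le_card_of_injOn
      (s := Finset.univ.filter
        (fun r : Fin n => (c : ℕ) ≤ (r : ℕ) + k ∧ (r : ℕ) ≤ (c : ℕ) + k))
      (f := fun r : Fin n => (r : ℕ) + k - (c : ℕ))
      (t := Finset.range (2 * k + 1))
      (fun r hr => by
        have h := (Finset.mem_filter.1 hr).2
        exact Finset.mem_range.2 (by show (r : ℕ) + k - (c : ℕ) < 2 * k + 1; omega))
      (fun r1 hr1 r2 hr2 he => by
        have h1 := (Finset.mem_filter.1 (Finset.mem_coe.1 hr1)).2
        have h2 := (Finset.mem_filter.1 (Finset.mem_coe.1 hr2)).2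
        have he' : (r1 : ℕ) + k - (c : ℕ) = (r2 : ℕ) + k - (c : ℕ) := by simpa using he
        exact Fin.ext (by omega))
    simpa using this
  calc ∑ r, P r c ≤ _ := h1
    _ = _ := h2
    _ ≤ 2 * (k : ℝ) + 1 := by
        have h4 := (Nat.cast_le (α := ℝ)).2 h3
        push_cast at h4
        linarith

lemma lamMax_le_of_good {P : Matrix (Fin n) (Fin n) ℝ} {k : ℕ}
    (hP0 : ∀ i j, 0 ≤ P i j) (hP1 : ∀ i, ∑ j, P i j ≤ 1) (hPle1 : ∀ i j, P i j ≤ 1)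
    (hPb : ∀ i j : Fin n, (i : ℕ) + k < (j : ℕ) ∨ (j : ℕ) + k < (i : ℕ) → P i j = 0) :
    lamMax (P * Pᵀ) ≤ 2 * (k : ℝ) + 1 := by
  apply Real.sSup_le
  · rintro t ⟨v, hv, hev⟩
    set S := ∑ i, v i ^ 2 with hS
    have hS0 : 0 < S := by
      obtain ⟨i0, hi0⟩ := Function.ne_iff.1 hv
      exact Finset.sum_pos' (fun i _ => sq_nonneg _)
        ⟨i0, Finset.mem_univ _, pow_two_pos_of_ne_zero (by simpa using hi0)⟩
    have hdot1 : v ⬝ᵥ ((P * Pᵀ) *ᵥ v) = t * S := by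
      rw [hev]
      simp only [dotProduct, Pi.smul_apply, smul_eq_mul, hS, Finset.mul_sum]
      exact Finset.sum_congr rfl fun i _ => by ring
    have hdot2 : v ⬝ᵥ ((P * Pᵀ) *ᵥ v) = ∑ j, (∑ i, P i j * v i) ^ 2 := by
      have hu : ∀ j, (Pᵀ *ᵥ v) j = ∑ i, P i j * v i := fun j => by
        simp [Matrix.mulVec, dotProduct, Matrix.transpose_apply]
      rw [← Matrix.mulVec_mulVec, Matrix.dotProduct_mulVec, ← Matrix.mulVec_transpose]
      simp only [dotProduct, hu]
      exact Finset.sum_congr rfl fun j _ => (pow_two _).symm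
    have key : ∀ j : Fin n, (∑ i, P i j * v i) ^ 2 ≤
        (2 * (k : ℝ) + 1) * ∑ i, P i j * v i ^ 2 := by
      intro j
      have cs := Finset.sum_mul_sq_le_sq_mul_sq Finset.univ
        (fun i => Real.sqrt (P i j)) (fun i => Real.sqrt (P i j) * v i)
      have e1 : ∀ i : Fin n, Real.sqrt (P i j) * (Real.sqrt (P i j) * v i) = P i j * v i :=
        fun i => by rw [← mul_assoc, Real.mul_self_sqrt (hP0 i j)]
      have e2 : ∀ i : Fin n, Real.sqrt (P i j) ^ 2 = P i j := fun i => Real.sq_sqrt (hP0 i j)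
      have e3 : ∀ i : Fin n, (Real.sqrt (P i j) * v i) ^ 2 = P i j * v i ^ 2 :=
        fun i => by rw [mul_pow, e2]
      simp only [e1, e2, e3] at cs
      calc (∑ i, P i j * v i) ^ 2 ≤ (∑ i, P i j) * ∑ i, P i j * v i ^ 2 := cs
        _ ≤ (2 * (k : ℝ) + 1) * ∑ i, P i j * v i ^ 2 :=
            mul_le_mul_of_nonneg_right (colsum_le hP0 hPle1 hPb j)
              (Finset.sum_nonneg fun i _ => mul_nonneg (hP0 i j) (sq_nonneg _))
    have sum_key : ∑ j, (∑ i, P i j * v i) ^ 2 ≤ (2 * (k : ℝ) + 1) * S := by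
      calc ∑ j, (∑ i, P i j * v i) ^ 2
          ≤ ∑ j, (2 * (k : ℝ) + 1) * ∑ i, P i j * v i ^ 2 :=
            Finset.sum_le_sum fun j _ => key j
        _ = (2 * (k : ℝ) + 1) * ∑ j, ∑ i, P i j * v i ^ 2 := by rw [Finset.mul_sum]
        _ = (2 * (k : ℝ) + 1) * ∑ i, (∑ j, P i j) * v i ^ 2 := by
            rw [Finset.sum_comm]
            simp_rw [Finset.sum_mul]
        _ ≤ (2 * (k : ℝ) + 1) * ∑ i, 1 * v i ^ 2 := by
            have h2k : (0 : ℝ) ≤ 2 * (k : ℝ) + 1 := by positivity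
            exact mul_le_mul_of_nonneg_left (Finset.sum_le_sum fun i _ =>
              mul_le_mul_of_nonneg_right (hP1 i) (sq_nonneg _)) h2k
        _ = (2 * (k : ℝ) + 1) * S := by simp [hS]
    have ht : t * S ≤ (2 * (k : ℝ) + 1) * S := by
      rw [← hdot1]; rw [hdot2]; exact sum_key
    exact le_of_mul_le_mul_right (by linarith) hS0
  · positivity

end Stmt15Aux

/-- entrywise and spectral bounds for products of observable-mode
matrices: entries in `[0,1]`, bandwidth `ι+1`, diagonal entries of `PPᵀ` at most
`2ι+1`, and `λ_max(PPᵀ) = σ_max(P)² < 2(2ι+1)`. -/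
theorem stmt15
    (n : ℕ) (hn : 2 ≤ n)
    (Δt Δx vm w : ℝ) (hΔt : 0 < Δt) (hΔx : 0 < Δx) (hvm : 0 < vm) (hw : 0 < w)
    (hv1 : vm * Δt / Δx < 1) (hw1 : w * Δt / Δx < 1)
    (ι : ℕ) (hι : 1 ≤ ι)
    (M : ℕ → Matrix (Fin n) (Fin n) ℝ)
    (hM : ∀ κ, 1 ≤ κ → κ ≤ ι → M κ ∈ setAO n (vm * Δt / Δx) (w * Δt / Δx)) :
    (∀ r c : Fin n, 0 ≤ prodSeq M ι r c ∧ prodSeq M ι r c ≤ 1) ∧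
    (∀ r c : Fin n, (r : ℕ) + (ι + 1) < (c : ℕ) ∨ (c : ℕ) + (ι + 1) < (r : ℕ) →
      prodSeq M ι r c = 0) ∧
    (∀ r : Fin n, (prodSeq M ι * (prodSeq M ι)ᵀ) r r ≤ 2 * (ι : ℝ) + 1) ∧
    lamMax (prodSeq M ι * (prodSeq M ι)ᵀ) < 2 * (2 * (ι : ℝ) + 1) := by
  have hv0 : 0 ≤ vm * Δt / Δx := by positivity
  have hw0 : 0 ≤ w * Δt / Δx := by positivity
  obtain ⟨h0, h1, hb⟩ :=
    good_prod hv0 hv1.le hw0 hw1.le hn ι M hM ι le_rfl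
  have hle1 : ∀ r c, prodSeq M ι r c ≤ 1 := fun r c =>
    le_trans (Finset.single_le_sum (f := fun j => prodSeq M ι r j)
      (fun j _ => h0 r j) (Finset.mem_univ c)) (h1 r)
  have hι' : (0 : ℝ) ≤ (ι : ℝ) := Nat.cast_nonneg ι
  refine ⟨fun r c => ⟨h0 r c, hle1 r c⟩, ?_, ?_, ?_⟩
  · intro r c hrc
    exact hb r c (by omega)
  · intro r
    have hdiag : (prodSeq M ι * (prodSeq M ι)ᵀ) r r
        = ∑ c, prodSeq M ι r c * prodSeq M ι r c := by
      simp [Matrix.mul_apply, Matrix.transpose_apply]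
    rw [hdiag]
    have hsq : ∑ c, prodSeq M ι r c * prodSeq M ι r c ≤ ∑ c, prodSeq M ι r c :=
      Finset.sum_le_sum fun c _ => mul_le_of_le_one_right (h0 r c) (hle1 r c)
    linarith [h1 r]
  · have hle := lamMax_le_of_good h0 h1 hle1 hb
    linarith

end
end
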